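/- Let (p_n) be a sequence of integers with p_n ≥ 2 for all n and p_n → ∞, and let (κ_n) be a sequence in (0,∞) with κ_n/p_n → 0. Then the sequence (p_n³/κ_n³)(e₁(p_n,κ_n) − κ_n/p_n) is bounded, p_n ẽ₂(p_n,κ_n) → 1, and f₂(p_n,κ_n) → 1 as n → ∞. -/

import Mathlib

open MeasureTheory intervalIntegral Filter

/-- `mInt p κ ℓ = ∫_{-1}^1 u^ℓ (1-u²)^{(p-3)/2} exp(κ u) du`. -/
noncomputable def mInt (p : ℕ) (κ : ℝ) (ℓ : ℕ) : ℝ :=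
  ∫ u in (-1 : ℝ)..1, u ^ ℓ * (1 - u ^ 2) ^ (((p : ℝ) - 3) / 2) * Real.exp (κ * u)

/-- `e₁(p,κ) = E[U]` under `FvML_p(θ,κ)`. -/
noncomputable def e1 (p : ℕ) (κ : ℝ) : ℝ := mInt p κ 1 / mInt p κ 0

/-- `e₂(p,κ) = E[U²]` under `FvML_p(θ,κ)`. -/
noncomputable def e2 (p : ℕ) (κ : ℝ) : ℝ := mInt p κ 2 / mInt p κ 0

/-- `ẽ₂(p,κ) = Var[U]` under `FvML_p(θ,κ)`. -/
noncomputable def etilde2 (p : ℕ) (κ : ℝ) : ℝ := e2 p κ - (e1 p κ) ^ 2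

/-- `f₂(p,κ) = E[1-U²]` under `FvML_p(θ,κ)`. -/
noncomputable def f2 (p : ℕ) (κ : ℝ) : ℝ := 1 - e2 p κ

section FvMLAux
set_option maxHeartbeats 1000000
open Set


lemma fvml_sqrt_int : IntervalIntegrable (fun u : ℝ => (1 - u) ^ (-(1:ℝ)/2) + (1 + u) ^ (-(1:ℝ)/2))
    volume (-1) 1 := by
  have hbase : IntervalIntegrable (fun x : ℝ => x ^ (-(1:ℝ)/2)) volume 0 2 :=
    intervalIntegrable_rpow' (by norm_num)
  have h1 : IntervalIntegrable (fun u : ℝ => (1 - u) ^ (-(1:ℝ)/2)) volume (-1) 1 := by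
    have := (hbase.comp_sub_left 1).symm
    rw [show (1:ℝ) - 2 = -1 by norm_num, show (1:ℝ) - 0 = 1 by norm_num] at this
    exact this
  have h2 : IntervalIntegrable (fun u : ℝ => (1 + u) ^ (-(1:ℝ)/2)) volume (-1) 1 := by
    have := hbase.comp_add_left 1
    rw [show (0:ℝ) - 1 = -1 by norm_num, show (2:ℝ) - 1 = 1 by norm_num] at this
    exact this
  exact h1.add h2

lemma fvml_ae_ne_one : ∀ᵐ u : ℝ, u ≠ (1:ℝ) := by
  refine ae_iff.mpr ?_
  simp only [not_not, Set.setOf_eq_eq_singleton]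
  exact Real.volume_singleton

lemma fvml_meas {s : ℝ} {g : ℝ → ℝ} (hg : Continuous g) (κ : ℝ) :
    AEStronglyMeasurable (fun u => g u * (1 - u ^ 2) ^ s * Real.exp (κ * u))
      (volume.restrict (Set.uIoc (-1:ℝ) 1)) := by
  rw [Set.uIoc_of_le (by norm_num : (-1:ℝ) ≤ 1),
    ← Measure.restrict_congr_set (Ioo_ae_eq_Ioc (a := (-1:ℝ)) (b := 1))]
  apply ContinuousOn.aestronglyMeasurable _ measurableSet_Ioo
  intro u hu
  have hb : (0:ℝ) < 1 - u ^ 2 := by obtain ⟨h1, h2⟩ := hu; nlinarith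
  apply ContinuousAt.continuousWithinAt
  have hrc : ContinuousAt (fun u : ℝ => (1 - u ^ 2) ^ s) u :=
    ((continuous_const.sub (continuous_pow 2)).continuousAt).rpow_const (Or.inl hb.ne')
  exact (hg.continuousAt.mul hrc).mul (Real.continuous_exp.continuousAt.comp
    ((continuous_const.mul continuous_id).continuousAt))

lemma fvml_integrable_gen {s : ℝ} (hs : -(1:ℝ)/2 ≤ s) {g : ℝ → ℝ} (hg : Continuous g) (κ : ℝ) :
    IntervalIntegrable (fun u => g u * (1 - u ^ 2) ^ s * Real.exp (κ * u)) volume (-1) 1 := by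
  obtain ⟨C, hC⟩ : ∃ C, ∀ x ∈ Icc (-1:ℝ) 1, ‖g x * Real.exp (κ * x)‖ ≤ C :=
    (isCompact_Icc).exists_bound_of_continuousOn
      ((hg.mul (Real.continuous_exp.comp (continuous_const.mul continuous_id))).continuousOn)
  have hC0 : 0 ≤ C := le_trans (norm_nonneg _) (hC 0 (by norm_num))
  apply (fvml_sqrt_int.const_mul C).mono_fun (fvml_meas hg κ)
  rw [Filter.EventuallyLE, ae_restrict_iff' measurableSet_uIoc]
  filter_upwards [fvml_ae_ne_one] with u hne hu
  rw [Set.uIoc_of_le (by norm_num : (-1:ℝ) ≤ 1)] at hu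
  obtain ⟨hl, hr⟩ := hu
  have hr' : u < 1 := lt_of_le_of_ne hr hne
  have hb : (0:ℝ) < 1 - u ^ 2 := by nlinarith
  have key : (1 - u ^ 2) ^ s ≤ (1 - u) ^ (-(1:ℝ)/2) + (1 + u) ^ (-(1:ℝ)/2) := by
    have hstep : (1 - u ^ 2) ^ s ≤ (1 - u ^ 2) ^ (-(1:ℝ)/2) := by
      rcases lt_or_ge (1 - u ^ 2) 1 with h | h
      · exact Real.rpow_le_rpow_of_exponent_ge hb (le_of_lt h) hs
      · have hu0 : u = 0 := by nlinarith
        simp [hu0]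
    rcases le_or_gt 0 u with h | h
    · have h1u : (0:ℝ) < 1 - u := by linarith
      have : (1 - u ^ 2) ^ (-(1:ℝ)/2) ≤ (1 - u) ^ (-(1:ℝ)/2) :=
        Real.rpow_le_rpow_of_nonpos h1u (by nlinarith) (by norm_num)
      have h0 : (0:ℝ) ≤ (1 + u) ^ (-(1:ℝ)/2) := Real.rpow_nonneg (by linarith) _
      linarith
    · have h1u : (0:ℝ) < 1 + u := by linarith
      have : (1 - u ^ 2) ^ (-(1:ℝ)/2) ≤ (1 + u) ^ (-(1:ℝ)/2) :=
        Real.rpow_le_rpow_of_nonpos h1u (by nlinarith) (by norm_num)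
      have h0 : (0:ℝ) ≤ (1 - u) ^ (-(1:ℝ)/2) := Real.rpow_nonneg (by linarith) _
      linarith
  calc ‖g u * (1 - u ^ 2) ^ s * Real.exp (κ * u)‖
      = ‖g u * Real.exp (κ * u)‖ * (1 - u ^ 2) ^ s := by
        simp only [norm_mul]
        rw [Real.norm_eq_abs ((1 - u^2)^s), abs_of_nonneg (Real.rpow_nonneg hb.le s)]
        ring
    _ ≤ C * ((1 - u) ^ (-(1:ℝ)/2) + (1 + u) ^ (-(1:ℝ)/2)) :=
        mul_le_mul (hC u ⟨hl.le, hr⟩) key (Real.rpow_nonneg hb.le s) hC0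
    _ ≤ ‖C * ((1 - u) ^ (-(1:ℝ)/2) + (1 + u) ^ (-(1:ℝ)/2))‖ := le_abs_self _


lemma fvml_hs {p : ℕ} (hp : 2 ≤ p) : -(1:ℝ)/2 ≤ ((p:ℝ) - 3)/2 := by
  have : (2:ℝ) ≤ (p:ℝ) := by exact_mod_cast hp
  linarith

lemma fvml_mInt_integrable {p : ℕ} (hp : 2 ≤ p) (κ : ℝ) (ℓ : ℕ) :
    IntervalIntegrable (fun u => u ^ ℓ * (1 - u ^ 2) ^ (((p : ℝ) - 3) / 2) * Real.exp (κ * u))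
      volume (-1) 1 :=
  fvml_integrable_gen (fvml_hs hp) (continuous_pow ℓ) κ

lemma fvml_m0_pos {p : ℕ} (hp : 2 ≤ p) (κ : ℝ) : 0 < mInt p κ 0 := by
  rw [mInt]
  apply intervalIntegral_pos_of_pos_on (fvml_mInt_integrable hp κ 0) _ (by norm_num)
  intro x hx
  have hb : (0:ℝ) < 1 - x ^ 2 := by obtain ⟨h1, h2⟩ := hx; nlinarith
  have h1 := Real.rpow_pos_of_pos hb (((p:ℝ) - 3)/2)
  have h2 := Real.exp_pos (κ * x)
  simp only [pow_zero, one_mul]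
  exact mul_pos h1 h2

lemma fvml_expand5 {p : ℕ} (hp : 2 ≤ p) (κ : ℝ) (a b c d e : ℝ) (i j k l m : ℕ) :
    ∫ u in (-1:ℝ)..1, (a*u^i + b*u^j + c*u^k + d*u^l + e*u^m) *
        (1 - u ^ 2) ^ (((p : ℝ) - 3) / 2) * Real.exp (κ * u)
      = a * mInt p κ i + b * mInt p κ j + c * mInt p κ k + d * mInt p κ l + e * mInt p κ m := by
  have I : ∀ (c:ℝ) (i:ℕ), IntervalIntegrable
      (fun u => c*u^i * (1 - u ^ 2) ^ (((p : ℝ) - 3) / 2) * Real.exp (κ * u)) volume (-1) 1 :=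
    fun c i => fvml_integrable_gen (fvml_hs hp) (continuous_const.mul (continuous_pow i)) κ
  have key : ∀ (c:ℝ) (i:ℕ), c * mInt p κ i
      = ∫ u in (-1:ℝ)..1, c*u^i * (1 - u ^ 2) ^ (((p : ℝ) - 3) / 2) * Real.exp (κ * u) := by
    intro c i
    rw [mInt, ← intervalIntegral.integral_const_mul]
    congr 1; ext u; ring
  rw [key, key, key, key, key,
    ← intervalIntegral.integral_add (I a i) (I b j),
    ← intervalIntegral.integral_add ((I a i).add (I b j)) (I c k),
    ← intervalIntegral.integral_add (((I a i).add (I b j)).add (I c k)) (I d l),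
    ← intervalIntegral.integral_add ((((I a i).add (I b j)).add (I c k)).add (I d l)) (I e m)]
  congr 1; ext u; ring

lemma fvml_poly_nonneg {p : ℕ} (hp : 2 ≤ p) (κ : ℝ) (a b c d e : ℝ) (i j k l m : ℕ)
    (h : ∀ u:ℝ, -1 ≤ u → u ≤ 1 → 0 ≤ a*u^i + b*u^j + c*u^k + d*u^l + e*u^m) :
    0 ≤ a * mInt p κ i + b * mInt p κ j + c * mInt p κ k + d * mInt p κ l + e * mInt p κ m := by
  rw [← fvml_expand5 hp κ a b c d e i j k l m]
  apply intervalIntegral.integral_nonneg (by norm_num : (-1:ℝ) ≤ 1)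
  intro u hu
  have hb : (0:ℝ) ≤ 1 - u ^ 2 := by obtain ⟨h1, h2⟩ := hu; nlinarith
  exact mul_nonneg (mul_nonneg (h u hu.1 hu.2) (Real.rpow_nonneg hb _)) (Real.exp_pos _).le

lemma fvml_ibp {p : ℕ} (hp : 2 ≤ p) (κ : ℝ) (ℓ : ℕ) :
    (ℓ:ℝ) * mInt p κ (ℓ-1) - ((ℓ:ℝ) + (p:ℝ) - 1) * mInt p κ (ℓ+1)
      + κ * mInt p κ ℓ - κ * mInt p κ (ℓ+2) = 0 := by
  have hp' : (2:ℝ) ≤ (p:ℝ) := by exact_mod_cast hp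
  set q : ℝ := ((p:ℝ) - 1)/2 with hq
  have hq0 : 0 < q := by rw [hq]; linarith
  set F : ℝ → ℝ := fun u => u ^ ℓ * (1 - u ^ 2) ^ q * Real.exp (κ * u) with hF
  set G : ℝ → ℝ := fun u => ((ℓ:ℝ)*u^(ℓ-1)*(1-u^2) - ((p:ℝ)-1)*u^(ℓ+1) + κ*u^ℓ*(1-u^2)) *
      (1 - u ^ 2) ^ (((p : ℝ) - 3) / 2) * Real.exp (κ * u) with hG
  have hcont : ContinuousOn F (Icc (-1:ℝ) 1) := by
    apply Continuous.continuousOn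
    exact ((continuous_pow ℓ).mul ((continuous_const.sub (continuous_pow 2)).rpow_const
      (fun x => Or.inr hq0.le))).mul (Real.continuous_exp.comp (continuous_const.mul continuous_id))
  have hderiv : ∀ x ∈ Ioo (-1:ℝ) 1, HasDerivAt F (G x) x := by
    intro x hx
    have hb : (0:ℝ) < 1 - x ^ 2 := by obtain ⟨h1, h2⟩ := hx; nlinarith
    have h1 : HasDerivAt (fun u:ℝ => u ^ ℓ) ((ℓ:ℝ) * x^(ℓ-1)) x := hasDerivAt_pow ℓ x
    have h2 : HasDerivAt (fun u:ℝ => 1 - u^2) (-(2*x)) x := by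
      simpa using (hasDerivAt_pow 2 x).const_sub 1
    have h3 : HasDerivAt (fun u:ℝ => (1-u^2) ^ q) (-(2*x) * q * (1-x^2)^(q-1)) x :=
      h2.rpow_const (Or.inl hb.ne')
    have h4 : HasDerivAt (fun u:ℝ => Real.exp (κ*u)) (κ * Real.exp (κ*x)) x := by
      convert ((hasDerivAt_id' x).const_mul κ).exp using 1
      ring
    have h5 : HasDerivAt F _ x := (h1.mul h3).mul h4
    convert h5 using 1
    have hqs : q - 1 = ((p:ℝ) - 3)/2 := by rw [hq]; ring
    have hpow : (1-x^2) ^ q = (1-x^2) * (1-x^2) ^ (((p:ℝ) - 3)/2) := by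
      rw [show q = 1 + ((p:ℝ)-3)/2 by rw [hq]; ring, Real.rpow_add hb, Real.rpow_one]
    rw [hG, hpow, hqs]
    have hps : x ^ ℓ * x = x ^ (ℓ+1) := by rw [pow_succ]
    have h2q : 2 * q = (p:ℝ) - 1 := by rw [hq]; ring
    simp only [Pi.mul_apply, hpow]
    linear_combination (2*q*(1-x^2)^(((p:ℝ)-3)/2)*Real.exp (κ*x)) * hps
      + ((1-x^2)^(((p:ℝ)-3)/2)*Real.exp (κ*x)*x^(ℓ+1)) * h2q
  have hGint : IntervalIntegrable G volume (-1) 1 := by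
    rw [hG]
    apply fvml_integrable_gen (fvml_hs hp) _ κ
    exact (((continuous_const.mul (continuous_pow (ℓ-1))).mul
        (continuous_const.sub (continuous_pow 2))).sub
        (continuous_const.mul (continuous_pow (ℓ+1)))).add
        ((continuous_const.mul (continuous_pow ℓ)).mul (continuous_const.sub (continuous_pow 2)))
  have hzero : ∫ u in (-1:ℝ)..1, G u = 0 := by
    rw [integral_eq_sub_of_hasDerivAt_of_le (by norm_num) hcont hderiv hGint, hF]
    have e1 : ((1:ℝ) - 1^2) = 0 := by norm_num
    have e2 : ((1:ℝ) - (-1)^2) = 0 := by norm_num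
    simp only [e1, e2, Real.zero_rpow hq0.ne']
    ring
  have hpoly : ∀ u:ℝ, ((ℓ:ℝ)*u^(ℓ-1)*(1-u^2) - ((p:ℝ)-1)*u^(ℓ+1) + κ*u^ℓ*(1-u^2))
      = (ℓ:ℝ)*u^(ℓ-1) + (-((ℓ:ℝ)+(p:ℝ)-1))*u^(ℓ+1) + κ*u^ℓ + (-κ)*u^(ℓ+2) + 0*u^0 := by
    intro u
    rcases ℓ with _ | n
    · push_cast
      ring
    · rw [Nat.succ_sub_one]
      push_cast
      ring
  have hGeq : ∫ u in (-1:ℝ)..1, G u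
      = (ℓ:ℝ) * mInt p κ (ℓ-1) + (-((ℓ:ℝ)+(p:ℝ)-1)) * mInt p κ (ℓ+1) + κ * mInt p κ ℓ
        + (-κ) * mInt p κ (ℓ+2) + 0 * mInt p κ 0 := by
    rw [← fvml_expand5 hp κ ((ℓ:ℝ)) (-((ℓ:ℝ)+(p:ℝ)-1)) κ (-κ) 0 (ℓ-1) (ℓ+1) ℓ (ℓ+2) 0]
    apply intervalIntegral.integral_congr
    intro u _
    rw [hG]
    simp only []
    rw [hpoly u]
  rw [hGeq] at hzero
  linarith

/-! Arithmetic helper lemmas (small contexts). -/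
section FvMLArith
variable {P A B D Q κ t : ℝ}

lemma fvml_pos_cancel {x m : ℝ} (hm : 0 < m) (h : 0 ≤ x * m) : 0 ≤ x := by nlinarith

lemma fvml_pw1 (A : ℝ) : ∀ u:ℝ, -1 ≤ u → u ≤ 1 →
    0 ≤ A^2*u^0 + (-(2*A))*u^1 + 1*u^2 + 0*u^0 + 0*u^0 := by
  intro u h1 h2; nlinarith [sq_nonneg (u - A)]

lemma fvml_pw2 (B : ℝ) : ∀ u:ℝ, -1 ≤ u → u ≤ 1 →
    0 ≤ B^2*u^0 + (-(2*B))*u^2 + 1*u^4 + 0*u^0 + 0*u^0 := by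
  intro u h1 h2; nlinarith [sq_nonneg (u^2 - B)]

lemma fvml_pw3 {A : ℝ} (hA0 : 0 ≤ A) (hA1 : A ≤ 1) : ∀ u:ℝ, -1 ≤ u → u ≤ 1 →
    0 ≤ (4*A^2 - A^4)*u^0 + (-(8*A))*u^1 + (4 + 2*A^2)*u^2 + (-1)*u^4 + 0*u^0 := by
  intro u h1 h2
  have h4 : (0:ℝ) ≤ 4 - (u + A)^2 := by nlinarith
  nlinarith [mul_nonneg (sq_nonneg (u - A)) h4]

lemma fvml_arith_var (hv4 : D - 2*A^2*B + A^4 ≤ 4*(B - A^2)) : D - B^2 ≤ 4*(B - A^2) := by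
  nlinarith [sq_nonneg (B - A^2)]

lemma fvml_arith_key1 (hP : 2 ≤ P) (hκ : 0 < κ)
    (hA : (P-1)*A = κ*(1-B)) (hPB : P*(P+1)*B = (P+1) + κ^2*(1-2*B+D)) :
    A - κ/P = -(κ^3*(1 - 2*B + D))/(P*((P-1)*(P+1))) := by
  have hP0 : (0:ℝ) < P := by linarith
  have h2 : P - 1 ≠ 0 := by intro h; nlinarith [h]
  have h3 : P + 1 ≠ 0 := by positivity
  have hden : P*((P-1)*(P+1)) ≠ 0 := by
    apply mul_ne_zero hP0.ne' (mul_ne_zero h2 h3)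
  have hnum : (A*P - κ) * ((P-1)*(P+1)) = -(κ^3*(1 - 2*B + D)) := by
    linear_combination (P*(P+1))*hA - κ*hPB
  have e : A - κ/P = (A*P - κ)/P := by field_simp
  rw [e, div_eq_div_iff hP0.ne' hden]
  linear_combination P*hnum

lemma fvml_arith_heq (hP : 2 ≤ P) (hκ : 0 < κ)
    (hA : (P-1)*A = κ*(1-B)) (hPB : P*(P+1)*B = (P+1) + κ^2*(1-2*B+D)) :
    P*(B - A^2) - 1
      = κ^2*(1-B)^2*(1 - 3*P)/((P+1)*(P-1)^2) + κ^2*(D - B^2)/(P+1) := by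
  have h2 : P - 1 ≠ 0 := by intro h; nlinarith [h]
  have h3 : P + 1 ≠ 0 := by positivity
  have hden : ((P+1))*(P-1)^2 ≠ 0 := mul_ne_zero h3 (pow_ne_zero 2 h2)
  have hnum : (P*(B - A^2) - 1) * ((P+1)*(P-1)^2)
      = κ^2*(1-B)^2*(1-3*P) + κ^2*(D-B^2)*(P-1)^2 := by
    linear_combination ((P-1)^2)*hPB - (P*(P+1)*((P-1)*A + κ*(1-B)))*hA
  have e : κ^2*(1-B)^2*(1 - 3*P)/((P+1)*(P-1)^2) + κ^2*(D - B^2)/(P+1)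
      = (κ^2*(1-B)^2*(1-3*P) + κ^2*(D-B^2)*(P-1)^2)/((P+1)*(P-1)^2) := by
    field_simp
  rw [e, eq_div_iff hden]
  linear_combination hnum

lemma fvml_arith_e2 (hP : 2 ≤ P) (hQ0 : 0 ≤ Q) (hQ1 : Q ≤ 1)
    (hPB : P*(P+1)*B = (P+1) + κ^2*Q) : B ≤ 1/P + (κ/P)^2 := by
  have hP0 : (0:ℝ) < P := by linarith
  have h1 : P*(P+1)*B ≤ (P+1) + κ^2 := by
    nlinarith [mul_le_mul_of_nonneg_left hQ1 (sq_nonneg κ)]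
  have h2 : (P+1) + κ^2 ≤ (1/P + (κ/P)^2)*(P*(P+1)) := by
    have e : (1/P + (κ/P)^2)*(P*(P+1)) = (P+1) + κ^2 + κ^2/P := by
      field_simp; ring
    have h3 : 0 ≤ κ^2/P := by positivity
    linarith [e.le]
  nlinarith [mul_pos hP0 (show (0:ℝ) < P+1 by linarith)]

lemma fvml_arith_c2 (hP : 2 ≤ P) (hQ0 : 0 ≤ Q) (hQ1 : Q ≤ 1) :
    |(-(P^2*Q/((P-1)*(P+1))))| ≤ 2 := by
  have hden : (0:ℝ) < (P-1)*(P+1) := by nlinarith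
  rw [abs_neg, abs_of_nonneg (div_nonneg (mul_nonneg (by positivity) hQ0) hden.le),
    div_le_iff₀ hden]
  nlinarith

lemma fvml_arith_T1 (hP : 2 ≤ P) (hB0 : 0 ≤ B) (hB1 : B ≤ 1) :
    |κ^2*(1-B)^2*(1 - 3*P)/((P+1)*(P-1)^2)| ≤ 12*(κ/P)^2 := by
  have hP0 : (0:ℝ) < P := by linarith
  have hden : (0:ℝ) < (P+1)*(P-1)^2 := by nlinarith [sq_nonneg (P-1)]
  rw [abs_div, abs_of_pos hden, div_le_iff₀ hden,
    show 12*(κ/P)^2 = 12*κ^2/P^2 by ring, div_mul_eq_mul_div, le_div_iff₀ (by positivity)]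
  have habs : |κ^2*(1-B)^2*(1 - 3*P)| = κ^2*(1-B)^2*(3*P - 1) := by
    rw [abs_mul, abs_of_nonneg (by positivity : (0:ℝ) ≤ κ^2*(1-B)^2),
      abs_of_nonpos (by linarith : 1 - 3*P ≤ 0)]
    ring
  rw [habs]
  have ht1 : (1-B)^2 ≤ 1 := by nlinarith
  have h3P : (0:ℝ) ≤ (3*P-1)*P^2 := by nlinarith
  have hs2 : (3*P - 1)*P^2 ≤ 12*((P+1)*(P-1)^2) := by nlinarith
  have hc1 : κ^2*(1-B)^2*((3*P-1)*P^2) ≤ κ^2*1*((3*P-1)*P^2) :=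
    mul_le_mul_of_nonneg_right (mul_le_mul_of_nonneg_left ht1 (sq_nonneg κ)) h3P
  have hc2 : κ^2*((3*P-1)*P^2) ≤ κ^2*(12*((P+1)*(P-1)^2)) :=
    mul_le_mul_of_nonneg_left hs2 (sq_nonneg κ)
  nlinarith [hc1, hc2]

lemma fvml_arith_T2 (hP : 2 ≤ P) (hv : 0 ≤ B - A^2) (hDB : 0 ≤ D - B^2)
    (h4 : D - B^2 ≤ 4*(B - A^2)) :
    κ^2*(D - B^2)/(P+1) ≤ 4*(κ/P)^2*(P*(B - A^2)) := by
  have hP0 : (0:ℝ) < P := by linarith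
  have e : 4*(κ/P)^2*(P*(B - A^2)) = 4*κ^2*(B - A^2)/P := by
    field_simp
  rw [e, div_le_div_iff₀ (by linarith : (0:ℝ) < P+1) hP0]
  have h1 : κ^2*(D - B^2)*P ≤ κ^2*(4*(B - A^2))*P :=
    mul_le_mul_of_nonneg_right (mul_le_mul_of_nonneg_left h4 (sq_nonneg κ)) hP0.le
  have h2 : κ^2*(4*(B - A^2))*P ≤ κ^2*(4*(B - A^2))*(P+1) :=
    mul_le_mul_of_nonneg_left (by linarith) (mul_nonneg (sq_nonneg κ) (by linarith))
  nlinarith [h1, h2]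

lemma fvml_arith_c4 (hP : 2 ≤ P) (hB0 : 0 ≤ B) (hB1 : B ≤ 1) (hv : 0 ≤ B - A^2)
    (hDB : 0 ≤ D - B^2) (h4 : D - B^2 ≤ 4*(B - A^2))
    (heq : P*(B - A^2) - 1
      = κ^2*(1-B)^2*(1 - 3*P)/((P+1)*(P-1)^2) + κ^2*(D - B^2)/((P+1))) :
    |P*(B - A^2) - 1| ≤ 12*(κ/P)^2 + 4*(κ/P)^2*(P*(B - A^2)) := by
  have hT2nn : 0 ≤ κ^2*(D - B^2)/(P+1) :=
    div_nonneg (mul_nonneg (sq_nonneg κ) hDB) (by linarith)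
  rw [heq]
  calc |κ^2*(1-B)^2*(1 - 3*P)/((P+1)*(P-1)^2) + κ^2*(D - B^2)/((P+1))|
      ≤ |κ^2*(1-B)^2*(1 - 3*P)/((P+1)*(P-1)^2)| + |κ^2*(D - B^2)/((P+1))| := abs_add_le _ _
    _ = |κ^2*(1-B)^2*(1 - 3*P)/((P+1)*(P-1)^2)| + κ^2*(D - B^2)/((P+1)) := by
        rw [abs_of_nonneg hT2nn]
    _ ≤ 12*(κ/P)^2 + 4*(κ/P)^2*(P*(B - A^2)) :=
        add_le_add (fvml_arith_T1 hP hB0 hB1) (fvml_arith_T2 hP hv hDB h4)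

end FvMLArith

lemma fvml_key {p : ℕ} (hp : 2 ≤ p) {κ : ℝ} (hκ : 0 < κ) :
    (0 ≤ e2 p κ ∧ e2 p κ ≤ 1/(p:ℝ) + (κ/(p:ℝ))^2) ∧
    |((p:ℝ)^3/κ^3) * (e1 p κ - κ/(p:ℝ))| ≤ 2 ∧
    0 ≤ (p:ℝ) * etilde2 p κ ∧
    |(p:ℝ) * etilde2 p κ - 1| ≤ 12*(κ/(p:ℝ))^2 + 4*(κ/(p:ℝ))^2 * ((p:ℝ) * etilde2 p κ) := by
  have hP : (2:ℝ) ≤ (p:ℝ) := by exact_mod_cast hp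
  have hP0 : (0:ℝ) < (p:ℝ) := by linarith
  have hP1pos : (0:ℝ) < (p:ℝ) + 1 := by linarith
  have hPm1pos : (0:ℝ) < (p:ℝ) - 1 := by linarith
  have ib0 := fvml_ibp hp κ 0
  have ib1 := fvml_ibp hp κ 1
  have ib2 := fvml_ibp hp κ 2
  norm_num at ib0 ib1 ib2
  set m0 := mInt p κ 0 with hm0def
  set m1 := mInt p κ 1 with hm1def
  set m2 := mInt p κ 2 with hm2def
  set m3 := mInt p κ 3 with hm3def
  set m4 := mInt p κ 4 with hm4def
  have hm0 : 0 < m0 := fvml_m0_pos hp κ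
  set A := m1/m0 with hAdef
  set B := m2/m0 with hBdef
  set C := m3/m0 with hCdef
  set D := m4/m0 with hDdef
  have eA : A * m0 = m1 := div_mul_cancel₀ m1 hm0.ne'
  have eB : B * m0 = m2 := div_mul_cancel₀ m2 hm0.ne'
  have eC : C * m0 = m3 := div_mul_cancel₀ m3 hm0.ne'
  have eD : D * m0 = m4 := div_mul_cancel₀ m4 hm0.ne'
  have h20 : m2 ≤ m0 := by
    have := fvml_poly_nonneg hp κ 1 (-1) 0 0 0 0 2 0 0 0 (by intro u h1 h2; nlinarith)
    linarith
  have h2nn : 0 ≤ m2 := by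
    have := fvml_poly_nonneg hp κ 1 0 0 0 0 2 0 0 0 0 (by intro u h1 h2; nlinarith [sq_nonneg u])
    linarith
  have h42 : m4 ≤ m2 := by
    have := fvml_poly_nonneg hp κ 1 (-1) 0 0 0 2 4 0 0 0
      (by intro u h1 h2
          have h3 : (0:ℝ) ≤ 1 - u^2 := by nlinarith
          nlinarith [mul_nonneg (sq_nonneg u) h3])
    linarith
  have h10 : m1 ≤ m0 := by
    have := fvml_poly_nonneg hp κ 1 (-1) 0 0 0 0 1 0 0 0 (by intro u h1 h2; nlinarith)
    linarith
  have hsq : 0 ≤ m0 - 2*m2 + m4 := by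
    have := fvml_poly_nonneg hp κ 1 (-2) 1 0 0 0 2 4 0 0
      (by intro u h1 h2; nlinarith [sq_nonneg (1 - u^2)])
    linarith
  have hvar1m : 0 ≤ A^2*m0 + (-(2*A))*m1 + m2 := by
    have := fvml_poly_nonneg hp κ (A^2) (-(2*A)) 1 0 0 0 1 2 0 0 (fvml_pw1 A)
    linarith
  have hcsm : 0 ≤ B^2*m0 + (-(2*B))*m2 + m4 := by
    have := fvml_poly_nonneg hp κ (B^2) (-(2*B)) 1 0 0 0 2 4 0 0 (fvml_pw2 B)
    linarith
  -- E-level identities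
  have hA : ((p:ℝ)-1)*A = κ*(1-B) := by
    rw [hAdef, hBdef]
    field_simp
    linear_combination (-1 : ℝ) * ib0
  have hB : (p:ℝ)*B = 1 + κ*A - κ*C := by
    rw [hAdef, hBdef, hCdef]
    field_simp
    linear_combination (-1 : ℝ) * ib1
  have hC : ((p:ℝ)+1)*C = 2*A + κ*B - κ*D := by
    rw [hAdef, hBdef, hCdef, hDdef]
    field_simp
    linear_combination (-1 : ℝ) * ib2
  have hB1 : B ≤ 1 := (div_le_one hm0).mpr h20
  have hB0 : 0 ≤ B := div_nonneg h2nn hm0.le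
  have hA1 : A ≤ 1 := (div_le_one hm0).mpr h10
  have hAnn : 0 ≤ A := by
    have h := mul_nonneg hκ.le (sub_nonneg.mpr hB1)
    nlinarith [hA]
  have hDB : D ≤ B := by
    rw [hDdef, hBdef]
    exact (div_le_div_iff_of_pos_right hm0).mpr h42
  have hQ0 : 0 ≤ 1 - 2*B + D := by
    have e : (m0 - 2*m2 + m4) = (1 - 2*B + D) * m0 := by
      linear_combination 2*eB - eD
    rw [e] at hsq
    exact fvml_pos_cancel hm0 hsq
  have hQ1 : 1 - 2*B + D ≤ 1 := by linarith
  have hvar1 : 0 ≤ B - A^2 := by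
    have e : A^2*m0 + (-(2*A))*m1 + m2 = (B - A^2)*m0 := by
      linear_combination (2*A)*eA - eB
    rw [e] at hvar1m
    exact fvml_pos_cancel hm0 hvar1m
  have hcsE : 0 ≤ D - B^2 := by
    have e : B^2*m0 + (-(2*B))*m2 + m4 = (D - B^2)*m0 := by
      linear_combination (2*B)*eB - eD
    rw [e] at hcsm
    exact fvml_pos_cancel hm0 hcsm
  have hvar4m : 0 ≤ (4*A^2 - A^4)*m0 + (-(8*A))*m1 + (4 + 2*A^2)*m2 + (-1)*m4 + 0*m0 :=
    fvml_poly_nonneg hp κ _ _ _ _ _ 0 1 2 4 0 (fvml_pw3 hAnn hA1)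
  have hvar4E : D - 2*A^2*B + A^4 ≤ 4*(B - A^2) := by
    have e : (4*A^2 - A^4)*m0 + (-(8*A))*m1 + (4 + 2*A^2)*m2 + (-1)*m4 + 0*m0
        = (4*(B - A^2) - (D - 2*A^2*B + A^4))*m0 := by
      linear_combination (8*A)*eA - (4 + 2*A^2)*eB + eD
    rw [e] at hvar4m
    have := fvml_pos_cancel hm0 hvar4m
    linarith
  have hDB4 : D - B^2 ≤ 4*(B - A^2) := fvml_arith_var hvar4E
  -- key identities
  have hEQ : ((p:ℝ)+1)*(A - C) = κ*(1 - 2*B + D) := by linear_combination hA - hC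
  have hPBm : (p:ℝ)*((p:ℝ)+1)*B = ((p:ℝ)+1) + κ^2*(1 - 2*B + D) := by
    linear_combination ((p:ℝ)+1)*hB + κ*hEQ
  -- e2 claims
  have hE2 : e2 p κ = B := rfl
  have claim1a : 0 ≤ e2 p κ := by rw [hE2]; exact hB0
  have claim1b : e2 p κ ≤ 1/(p:ℝ) + (κ/(p:ℝ))^2 := by
    rw [hE2]; exact fvml_arith_e2 hP hQ0 hQ1 hPBm
  -- e1 claim
  have hE1 : e1 p κ = A := rfl
  have hkey1 : A - κ/(p:ℝ)
      = -(κ^3*(1 - 2*B + D))/((p:ℝ)*(((p:ℝ)-1)*((p:ℝ)+1))) :=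
    fvml_arith_key1 hP hκ hA hPBm
  have claim2 : |((p:ℝ)^3/κ^3) * (e1 p κ - κ/(p:ℝ))| ≤ 2 := by
    rw [hE1, hkey1]
    have heq2 : (p:ℝ)^3/κ^3 * (-(κ^3*(1 - 2*B + D))/((p:ℝ)*(((p:ℝ)-1)*((p:ℝ)+1))))
        = -((p:ℝ)^2*(1 - 2*B + D)/(((p:ℝ)-1)*((p:ℝ)+1))) := by
      field_simp
    rw [heq2]
    exact fvml_arith_c2 hP hQ0 hQ1
  -- etilde2 claims
  have hEt : etilde2 p κ = B - A^2 := rfl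
  have claim3 : 0 ≤ (p:ℝ) * etilde2 p κ := by
    rw [hEt]; exact mul_nonneg hP0.le hvar1
  have heqd : (p:ℝ)*(B - A^2) - 1
      = κ^2*(1-B)^2*(1 - 3*(p:ℝ))/(((p:ℝ)+1)*((p:ℝ)-1)^2) + κ^2*(D - B^2)/((p:ℝ)+1) :=
    fvml_arith_heq hP hκ hA hPBm
  have claim4 : |(p:ℝ) * etilde2 p κ - 1|
      ≤ 12*(κ/(p:ℝ))^2 + 4*(κ/(p:ℝ))^2 * ((p:ℝ) * etilde2 p κ) := by
    rw [hEt]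
    exact fvml_arith_c4 hP hB0 hB1 hvar1 hcsE hDB4 heqd
  exact ⟨⟨claim1a, claim1b⟩, claim2, claim3, claim4⟩

end FvMLAux

set_option maxHeartbeats 1000000 in
theorem moments_regime_kappa_over_p_to_zero (p : ℕ → ℕ) (hp2 : ∀ n, 2 ≤ p n)
    (hp : Tendsto (fun n => (p n : ℝ)) atTop atTop)
    (κ : ℕ → ℝ) (hκ : ∀ n, 0 < κ n)
    (hκp : Tendsto (fun n => κ n / (p n : ℝ)) atTop (nhds 0)) :
    (∃ C : ℝ, ∀ n,
        |((p n : ℝ) ^ 3 / (κ n) ^ 3) * (e1 (p n) (κ n) - κ n / (p n : ℝ))| ≤ C) ∧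
      Tendsto (fun n => (p n : ℝ) * etilde2 (p n) (κ n)) atTop (nhds 1) ∧
      Tendsto (fun n => f2 (p n) (κ n)) atTop (nhds 1) := by
  have key := fun n => fvml_key (hp2 n) (hκ n)
  set t : ℕ → ℝ := fun n => κ n / (p n : ℝ) with ht
  have htt : Tendsto (fun n => (t n)^2) atTop (nhds 0) := by
    have h := hκp.mul hκp
    norm_num at h
    simpa [pow_two] using h
  refine ⟨⟨2, fun n => (key n).2.1⟩, ?_, ?_⟩
  · set x : ℕ → ℝ := fun n => (p n : ℝ) * etilde2 (p n) (κ n) with hx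
    have hx0 : ∀ n, 0 ≤ x n := fun n => (key n).2.2.1
    have hxb : ∀ n, |x n - 1| ≤ 12*(t n)^2 + 4*(t n)^2 * x n := fun n => (key n).2.2.2
    have hev : ∀ᶠ n in atTop, (t n)^2 ≤ 1/8 :=
      htt.eventually (eventually_le_nhds (by norm_num))
    have hxbound : ∀ᶠ n in atTop, x n ≤ 5 := by
      filter_upwards [hev] with n hn
      nlinarith [le_abs_self (x n - 1), hxb n, hx0 n, sq_nonneg (t n),
        mul_le_mul_of_nonneg_right hn (hx0 n)]
    have hfinal : ∀ᶠ n in atTop, ‖x n - 1‖ ≤ 32 * (t n)^2 := by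
      filter_upwards [hev, hxbound] with n h1 h2
      rw [Real.norm_eq_abs]
      nlinarith [hxb n, sq_nonneg (t n),
        mul_le_mul_of_nonneg_left h2 (mul_nonneg (by norm_num : (0:ℝ) ≤ 4) (sq_nonneg (t n)))]
    have hlim : Tendsto (fun n => x n - 1) atTop (nhds 0) :=
      squeeze_zero_norm' hfinal (by simpa using htt.const_mul 32)
    exact tendsto_sub_nhds_zero_iff.mp hlim
  · have h1 : Tendsto (fun n => 1/(p n : ℝ)) atTop (nhds 0) := by
      simpa [one_div, Pi.inv_def] using hp.inv_tendsto_atTop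
    have he2 : Tendsto (fun n => e2 (p n) (κ n)) atTop (nhds 0) := by
      apply squeeze_zero (fun n => (key n).1.1) (fun n => (key n).1.2)
      simpa using h1.add htt
    have hf : Tendsto (fun n => f2 (p n) (κ n)) atTop (nhds (1 - 0)) :=
      tendsto_const_nhds.sub he2
    norm_num at hf
    exact hf
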